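/- Let C_n^σ be an oriented cycle of order n. Then sr(C_n^σ) = n if C_n^σ is oddly-oriented, sr(C_n^σ) = n − 2 if C_n^σ is evenly-oriented, and sr(C_n^σ) = n − 1 if n is odd. -/

import Mathlib

open scoped Classical
open Fin.NatCast Fin.CommRing
def IsSkewAdjMatrix {V : Type*} (G : SimpleGraph V) (S : Matrix V V ℝ) : Prop :=
  (∀ i j, G.Adj i j → S i j = 1 ∨ S i j = -1) ∧
  (∀ i j, ¬ G.Adj i j → S i j = 0) ∧
  (∀ i j, S j i = - S i j)
namespace SkewAux
variable {n : ℕ} [NeZero n]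
lemma val_one (hn : 3 ≤ n) : (1 : Fin n).val = 1 := by
  rw [Fin.val_one']; exact Nat.mod_eq_of_lt (by omega)
lemma val_zero : (0 : Fin n).val = 0 := by simp
lemma cast_mk (m : ℕ) (h : m < n) : ((m : ℕ) : Fin n) = ⟨m, h⟩ := by
  apply Fin.ext; rw [Fin.val_natCast]; exact Nat.mod_eq_of_lt h
lemma mk_sub_one (hn : 3 ≤ n) (m : ℕ) (h1 : m + 1 < n) :
    (⟨m + 1, h1⟩ : Fin n) - 1 = ⟨m, by omega⟩ := by
  apply Fin.ext; rw [Fin.sub_def]; simp only [val_one hn]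
  show (n - 1 + (m + 1)) % n = m
  rw [show n - 1 + (m + 1) = n + m by omega, Nat.add_mod_left, Nat.mod_eq_of_lt (by omega)]
lemma mk_add_one (hn : 3 ≤ n) (m : ℕ) (h1 : m + 1 < n) (h2 : m + 2 < n) :
    (⟨m + 1, h1⟩ : Fin n) + 1 = ⟨m + 2, h2⟩ := by
  apply Fin.ext; rw [Fin.add_def]; simp only [val_one hn]
  exact Nat.mod_eq_of_lt (by omega)
lemma zero_sub_one (hn : 3 ≤ n) : (0 : Fin n) - 1 = ⟨n - 1, by omega⟩ := by
  apply Fin.ext; rw [Fin.sub_def]; simp only [val_one hn, val_zero]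
  show (n - 1 + 0) % n = n - 1
  rw [Nat.add_zero, Nat.mod_eq_of_lt (by omega)]
lemma last_add_one (hn : 3 ≤ n) (h1 : n - 1 < n) : (⟨n - 1, h1⟩ : Fin n) + 1 = 0 := by
  apply Fin.ext; rw [Fin.add_def]; simp only [val_one hn, val_zero]
  show (n - 1 + 1) % n = 0
  rw [show n - 1 + 1 = n by omega, Nat.mod_self]
lemma last_sub_one (hn : 3 ≤ n) (h1 : n - 1 < n) :
    (⟨n - 1, h1⟩ : Fin n) - 1 = ⟨n - 2, by omega⟩ := by
  apply Fin.ext; rw [Fin.sub_def]; simp only [val_one hn]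
  show (n - 1 + (n - 1)) % n = n - 2
  rw [show n - 1 + (n - 1) = n + (n - 2) by omega, Nat.add_mod_left,
    Nat.mod_eq_of_lt (by omega)]
lemma two_ne_zero' (hn : 3 ≤ n) : (2 : Fin n) ≠ 0 := by
  have h2 : ((2 : ℕ) : Fin n) = (2 : Fin n) := by norm_cast
  rw [← h2]; intro hc
  have := Fin.val_natCast 2 n
  rw [hc, Nat.mod_eq_of_lt (by omega)] at this
  simp at this
end SkewAux

section Main
open SkewAux
set_option linter.unusedSectionVars false

variable {n : ℕ} [NeZero n] (hn : 3 ≤ n) (S : Matrix (Fin n) (Fin n) ℝ)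
  (hS : IsSkewAdjMatrix (SimpleGraph.cycleGraph n) S)

noncomputable def PiP (S : Matrix (Fin n) (Fin n) ℝ) : ℕ → ℝ :=
  fun m => ∏ k ∈ Finset.range m, S (k : Fin n) ((k : Fin n) + 1)

include hn hS

lemma adj_succ (i : Fin n) : (SimpleGraph.cycleGraph n).Adj i (i + 1) := by
  rw [SimpleGraph.cycleGraph_adj']
  right
  rw [add_sub_cancel_left, val_one hn]

lemma edge_pm (i : Fin n) : S i (i + 1) = 1 ∨ S i (i + 1) = -1 :=
  hS.1 i (i + 1) (adj_succ hn S hS i)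

lemma edge_sq (i : Fin n) : S i (i + 1) * S i (i + 1) = 1 := by
  rcases edge_pm hn S hS i with h | h <;> rw [h] <;> norm_num

lemma edge_ne (i : Fin n) : S i (i + 1) ≠ 0 := by
  rcases edge_pm hn S hS i with h | h <;> rw [h] <;> norm_num

lemma S_zero (i j : Fin n) (h1 : j ≠ i - 1) (h2 : j ≠ i + 1) : S i j = 0 := by
  apply hS.2.1
  rw [SimpleGraph.cycleGraph_adj']
  push_neg
  constructor
  · intro hc
    apply h1
    have hv : i - j = 1 := by apply Fin.ext; rw [hc, val_one hn]
    calc j = i - (i - j) := by ring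
    _ = i - 1 := by rw [hv]
  · intro hc
    apply h2
    have hv : j - i = 1 := by apply Fin.ext; rw [hc, val_one hn]
    calc j = i + (j - i) := by ring
    _ = i + 1 := by rw [hv]

lemma S_prev (i : Fin n) : S i (i - 1) = -(S (i - 1) ((i - 1) + 1)) := by
  rw [hS.2.2 (i - 1) i]
  congr 2
  rw [sub_add_cancel]

lemma mulVec_formula (x : Fin n → ℝ) (i : Fin n) :
    S.mulVec x i = -(S (i - 1) ((i - 1) + 1)) * x (i - 1) + S i (i + 1) * x (i + 1) := by
  have hne : i - 1 ≠ i + 1 := by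
    intro hc
    apply two_ne_zero' hn
    have h2 : (2 : Fin n) = i + 1 - (i - 1) := by ring
    rw [h2, ← hc, sub_self]
  have hsum : S.mulVec x i = ∑ j ∈ ({i - 1, i + 1} : Finset (Fin n)), S i j * x j := by
    rw [Matrix.mulVec, dotProduct]
    symm
    apply Finset.sum_subset (Finset.subset_univ _)
    intro j _ hj
    simp only [Finset.mem_insert, Finset.mem_singleton] at hj
    push_neg at hj
    rw [S_zero hn S hS i j hj.1 hj.2, zero_mul]
  rw [hsum, Finset.sum_pair hne, S_prev hn S hS]

lemma Pi_zero : PiP S 0 = 1 := by simp [PiP]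

lemma Pi_succ (m : ℕ) (h : m < n) :
    PiP S (m + 1) = PiP S m * S ⟨m, h⟩ (⟨m, h⟩ + 1) := by
  simp only [PiP, Finset.prod_range_succ, cast_mk m h]

lemma Pi_one : PiP S 1 = S 0 (0 + 1) := by
  rw [Pi_succ hn S hS 0 (by omega), Pi_zero hn S hS, one_mul,
    show (⟨0, (by omega : 0 < n)⟩ : Fin n) = 0 from Fin.ext (by rw [val_zero])]

lemma Pi_sq (m : ℕ) : PiP S m * PiP S m = 1 := by
  rw [PiP, ← Finset.prod_mul_distrib]
  apply Finset.prod_eq_one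
  intro k _
  exact edge_sq hn S hS _

lemma Pi_n : PiP S n = ∏ i : Fin n, S i (i + 1) := by
  rw [PiP, ← Fin.prod_univ_eq_prod_range (fun k => S (k : Fin n) ((k : Fin n) + 1)) n]
  apply Finset.prod_congr rfl
  intro i _
  rw [Fin.cast_val_eq_self]

lemma ker_rec (x : Fin n → ℝ) (hx : S.mulVec x = 0) (m : ℕ) (h2 : m + 2 < n) :
    x ⟨m + 2, h2⟩ =
      S ⟨m + 1, by omega⟩ (⟨m + 1, by omega⟩ + 1) *
        (S ⟨m, by omega⟩ (⟨m, by omega⟩ + 1) * x ⟨m, by omega⟩) := by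
  have hc := congrFun hx ⟨m + 1, by omega⟩
  rw [mulVec_formula hn S hS, mk_sub_one hn m (by omega), mk_add_one hn m (by omega) h2] at hc
  simp only [Pi.zero_apply] at hc
  rw [show S (⟨m + 1, by omega⟩ : Fin n) (⟨m + 2, h2⟩ : Fin n)
      = S (⟨m + 1, by omega⟩ : Fin n) ((⟨m + 1, by omega⟩ : Fin n) + 1) from by
    rw [mk_add_one hn m (by omega) h2]] at hc
  have hsq := edge_sq hn S hS ⟨m + 1, by omega⟩
  set A := S (⟨m + 1, by omega⟩ : Fin n) ((⟨m + 1, by omega⟩ : Fin n) + 1)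
  set B := S (⟨m, by omega⟩ : Fin n) ((⟨m, by omega⟩ : Fin n) + 1)
  have : A * (A * x ⟨m + 2, h2⟩) = A * (B * x ⟨m, by omega⟩) := by
    congr 1; linarith
  rw [← mul_assoc, hsq, one_mul] at this
  rw [this]

lemma L1 (x : Fin n → ℝ) (hx : S.mulVec x = 0) :
    ∀ (m : ℕ) (h : m < n),
      x ⟨m, h⟩ = PiP S m * (if Even m then x 0 else S 0 (0 + 1) * x 1) := by
  intro m
  induction m using Nat.strong_induction_on with
  | _ m IH =>
    intro h
    match m, IH with
    | 0, IH =>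
      rw [show (⟨0, h⟩ : Fin n) = 0 from Fin.ext (by rw [val_zero]), Pi_zero hn S hS]
      simp
    | 1, IH =>
      rw [show (⟨1, h⟩ : Fin n) = 1 from Fin.ext (by rw [val_one hn]), Pi_one hn S hS]
      simp only [Nat.not_even_one, if_false]
      rw [← mul_assoc, edge_sq hn S hS 0, one_mul]
    | (m + 2), IH =>
      have hrec := ker_rec hn S hS x hx m h
      have hIH := IH m (by omega) (by omega)
      have hpar : Even (m + 2) ↔ Even m := by simp [parity_simps]
      have hPi2 : PiP S (m + 2) =
          PiP S m * S ⟨m, by omega⟩ (⟨m, by omega⟩ + 1) *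
            S ⟨m + 1, by omega⟩ (⟨m + 1, by omega⟩ + 1) := by
        rw [Pi_succ hn S hS (m + 1) (by omega), Pi_succ hn S hS m (by omega)]
      rw [hrec, hIH, hPi2, if_congr hpar rfl rfl]
      ring

lemma ker_construct (c : ℕ → ℝ) (hc2 : ∀ m, c (m + 2) = c m)
    (h1 : c 1 = PiP S n * c (n - 1))
    (h2 : c 0 = PiP S n * c (n - 2)) :
    S.mulVec (fun j => PiP S j.val * c j.val) = 0 := by
  have hn1 : n - 1 < n := by omega
  have hn2 : n - 2 < n := by omega
  have hPa : PiP S n = PiP S (n - 1) * S ⟨n - 1, hn1⟩ (⟨n - 1, hn1⟩ + 1) := by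
    have := Pi_succ hn S hS (n - 1) hn1
    rwa [show n - 1 + 1 = n by omega] at this
  have hPb : PiP S (n - 1) = PiP S (n - 2) * S ⟨n - 2, hn2⟩ (⟨n - 2, hn2⟩ + 1) := by
    have := Pi_succ hn S hS (n - 2) hn2
    rwa [show n - 2 + 1 = n - 1 by omega] at this
  funext i
  rw [mulVec_formula hn S hS]
  simp only [Pi.zero_apply]
  obtain ⟨m, hm⟩ := i
  rcases Nat.eq_zero_or_pos m with h0 | hpos
  · subst h0
    rw [show (⟨0, hm⟩ : Fin n) = 0 from Fin.ext (by rw [val_zero]), zero_sub_one hn]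
    have e01 : (0 : Fin n) + 1 = 1 := by ring
    rw [e01]
    dsimp only
    simp only [val_one hn]
    have hsq0 := edge_sq hn S hS 0
    rw [e01] at hsq0
    have hP1' : PiP S 1 = S 0 1 := by rw [Pi_one hn S hS, e01]
    rw [hP1']
    linear_combination c (n - 1) * hPa + c 1 * hsq0 + h1
  · obtain ⟨k, rfl⟩ : ∃ k, m = k + 1 := ⟨m - 1, by omega⟩
    by_cases hlast : k + 2 = n
    · have hmk : (⟨k + 1, hm⟩ : Fin n) = ⟨n - 1, hn1⟩ := Fin.ext (by simp; omega)
      rw [hmk, last_sub_one hn hn1, last_add_one hn hn1]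
      rw [show S (⟨n - 1, hn1⟩ : Fin n) (0 : Fin n)
          = S (⟨n - 1, hn1⟩ : Fin n) ((⟨n - 1, hn1⟩ : Fin n) + 1) from by
        rw [last_add_one hn hn1]]
      dsimp only
      simp only [val_zero]
      rw [Pi_zero hn S hS]
      have hsqA := edge_sq hn S hS ⟨n - 1, hn1⟩
      linear_combination S ⟨n - 1, hn1⟩ (⟨n - 1, hn1⟩ + 1) * h2 +
        (c (n - 2) * S ⟨n - 1, hn1⟩ (⟨n - 1, hn1⟩ + 1)) * hPa +
        (PiP S (n - 1) * c (n - 2)) * hsqA + c (n - 2) * hPb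
    · have hk2 : k + 2 < n := by omega
      rw [mk_sub_one hn k hm, mk_add_one hn k hm hk2]
      rw [show S (⟨k + 1, hm⟩ : Fin n) (⟨k + 2, hk2⟩ : Fin n)
          = S (⟨k + 1, hm⟩ : Fin n) ((⟨k + 1, hm⟩ : Fin n) + 1) from by
        rw [mk_add_one hn k hm hk2]]
      dsimp only
      rw [hc2 k]
      have hPi2 : PiP S (k + 2) =
          PiP S k * S ⟨k, by omega⟩ (⟨k, by omega⟩ + 1) *
            S ⟨k + 1, hm⟩ (⟨k + 1, hm⟩ + 1) := by
        rw [Pi_succ hn S hS (k + 1) (by omega), Pi_succ hn S hS k (by omega)]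
      rw [hPi2]
      have hsq := edge_sq hn S hS ⟨k + 1, hm⟩
      linear_combination (PiP S k * S ⟨k, by omega⟩ (⟨k, by omega⟩ + 1) * c k) * hsq

end Main

section Closing
open SkewAux
variable {n : ℕ} [NeZero n] (hn : 3 ≤ n) (S : Matrix (Fin n) (Fin n) ℝ)
  (hS : IsSkewAdjMatrix (SimpleGraph.cycleGraph n) S)
include hn hS

lemma closeN (x : Fin n → ℝ) (hx : S.mulVec x = 0) :
    S ⟨n - 1, by omega⟩ ((⟨n - 1, by omega⟩ : Fin n) + 1) * x 0 =
      S ⟨n - 2, by omega⟩ ((⟨n - 2, by omega⟩ : Fin n) + 1) * x ⟨n - 2, by omega⟩ := by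
  have hn1 : n - 1 < n := by omega
  have hc := congrFun hx ⟨n - 1, hn1⟩
  rw [mulVec_formula hn S hS, last_sub_one hn hn1, last_add_one hn hn1] at hc
  rw [show S (⟨n - 1, hn1⟩ : Fin n) (0 : Fin n)
      = S (⟨n - 1, hn1⟩ : Fin n) ((⟨n - 1, hn1⟩ : Fin n) + 1) from by
    rw [last_add_one hn hn1]] at hc
  simp only [Pi.zero_apply] at hc
  linarith

lemma close0 (x : Fin n → ℝ) (hx : S.mulVec x = 0) :
    S 0 (0 + 1) * x 1 =
      S ⟨n - 1, by omega⟩ ((⟨n - 1, by omega⟩ : Fin n) + 1) * x ⟨n - 1, by omega⟩ := by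
  have hn1 : n - 1 < n := by omega
  have e01 : (0 : Fin n) + 1 = 1 := by ring
  have hc := congrFun hx 0
  rw [mulVec_formula hn S hS, zero_sub_one hn, e01] at hc
  rw [show S (0 : Fin n) (1 : Fin n) = S 0 (0 + 1) from by rw [e01]] at hc
  simp only [Pi.zero_apply] at hc
  linarith

end Closing

noncomputable def adjMat {V : Type*} (G : SimpleGraph V) : Matrix V V ℝ :=
  Matrix.of fun i j => if G.Adj i j then 1 else 0

noncomputable def cycDim {V : Type*} (G : SimpleGraph V) : ℤ :=
  (G.edgeSet.ncard : ℤ) - Nat.card V + Nat.card G.ConnectedComponent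

open SkewAux in
/-- Skew-rank of an oriented cycle: n if oddly-oriented, n-2 if
evenly-oriented, n-1 if n is odd. The sign of the orientation is the sign of
the product of the skew-adjacency entries along the cycle. -/
theorem skewRank_oriented_cycle (n : ℕ) [NeZero n] (hn : 3 ≤ n)
    (S : Matrix (Fin n) (Fin n) ℝ)
    (hS : IsSkewAdjMatrix (SimpleGraph.cycleGraph n) S) :
    (Even n → (∏ i : Fin n, S i (i + 1)) < 0 → S.rank = n) ∧
    (Even n → 0 < (∏ i : Fin n, S i (i + 1)) → S.rank = n - 2) ∧
    (Odd n → S.rank = n - 1) := by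
  have hn1 : n - 1 < n := by omega
  have hn2 : n - 2 < n := by omega
  have hA : S ⟨n - 1, hn1⟩ ((⟨n - 1, hn1⟩ : Fin n) + 1)
      = S ⟨n - 1, hn1⟩ ((⟨n - 1, hn1⟩ : Fin n) + 1) := rfl
  set A := S ⟨n - 1, hn1⟩ ((⟨n - 1, hn1⟩ : Fin n) + 1) with hAdef
  set B := S ⟨n - 2, hn2⟩ ((⟨n - 2, hn2⟩ : Fin n) + 1) with hBdef
  set s0 := S 0 ((0 : Fin n) + 1) with hs0def
  set Pn := PiP S n with hPndef
  set Q := PiP S (n - 1) with hQdef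
  set P2 := PiP S (n - 2) with hP2def
  have hsqA : A * A = 1 := edge_sq hn S hS _
  have hsq0 : s0 * s0 = 1 := edge_sq hn S hS _
  have hPP : Pn * Pn = 1 := Pi_sq hn S hS n
  have hP1 : Pn = 1 ∨ Pn = -1 := mul_self_eq_one_iff.mp hPP
  have hPneq : Pn = ∏ i : Fin n, S i (i + 1) := Pi_n hn S hS
  have hPa : Pn = Q * A := by
    have h := Pi_succ hn S hS (n - 1) hn1
    rwa [show n - 1 + 1 = n by omega] at h
  have hPb : Q = P2 * B := by
    have h := Pi_succ hn S hS (n - 2) hn2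
    rwa [show n - 2 + 1 = n - 1 by omega] at h
  have hrank : S.rank + Module.finrank ℝ ↥(LinearMap.ker S.mulVecLin) = n := by
    have h := LinearMap.finrank_range_add_finrank_ker S.mulVecLin
    rw [Module.finrank_fintype_fun_eq_card, Fintype.card_fin] at h
    exact h
  have hker0 : ∀ x : Fin n → ℝ, S.mulVec x = 0 → x 0 = 0 → x 1 = 0 → x = 0 := by
    intro x hx h0 h1
    funext j
    show x j = 0
    have hj := L1 hn S hS x hx j.val j.isLt
    rw [Fin.eta] at hj
    rw [hj, h0, h1]
    split_ifs <;> ring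
  have hmemiff : ∀ x : Fin n → ℝ,
      x ∈ LinearMap.ker S.mulVecLin ↔ S.mulVec x = 0 := by
    intro x
    rw [LinearMap.mem_ker, Matrix.mulVecLin_apply]
  refine ⟨?_, ?_, ?_⟩
  · -- Even, negative product : rank = n
    intro heven hneg
    have hPn1 : Pn = -1 := by
      rcases hP1 with h | h
      · rw [← hPneq, h] at hneg; norm_num at hneg
      · exact h
    have hnm : n % 2 = 0 := Nat.even_iff.mp heven
    have hEn2 : Even (n - 2) := Nat.even_iff.mpr (by omega)
    have hOn1 : ¬ Even (n - 1) := by rw [Nat.even_iff]; omega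
    have hkerbot : LinearMap.ker S.mulVecLin = ⊥ := by
      rw [Submodule.eq_bot_iff]
      intro x hxmem
      have hx : S.mulVec x = 0 := (hmemiff x).mp hxmem
      have hcN := closeN hn S hS x hx
      have hL2 := L1 hn S hS x hx (n - 2) hn2
      rw [if_pos hEn2] at hL2
      rw [hL2] at hcN
      have h0eq : x 0 = Pn * x 0 := by
        linear_combination A * hcN - x 0 * hsqA - x 0 * hPa - (x 0 * A) * hPb
      rw [hPn1] at h0eq
      have hx0 : x 0 = 0 := by linarith
      have hc0 := close0 hn S hS x hx
      have hL1' := L1 hn S hS x hx (n - 1) hn1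
      rw [if_neg hOn1] at hL1'
      rw [hL1'] at hc0
      have h1eq : s0 * x 1 = Pn * (s0 * x 1) := by
        linear_combination hc0 - (s0 * x 1) * hPa
      rw [hPn1] at h1eq
      have hsx0 : s0 * x 1 = 0 := by linarith
      have hx1 : x 1 = 0 := by linear_combination s0 * hsx0 - x 1 * hsq0
      exact hker0 x hx hx0 hx1
    have hfr0 : Module.finrank ℝ ↥(LinearMap.ker S.mulVecLin) = 0 := by
      rw [hkerbot]; exact finrank_bot ℝ _
    omega
  · -- Even, positive product : rank = n - 2
    intro heven hpos
    have hPn1 : Pn = 1 := by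
      rcases hP1 with h | h
      · exact h
      · rw [← hPneq, h] at hpos; norm_num at hpos
    have hnm : n % 2 = 0 := Nat.even_iff.mp heven
    have hEn2 : Even (n - 2) := Nat.even_iff.mpr (by omega)
    have hOn1 : ¬ Even (n - 1) := by rw [Nat.even_iff]; omega
    set cv : ℕ → ℝ := fun m => if Even m then 1 else 0 with hcv
    set cw : ℕ → ℝ := fun m => if Even m then 0 else 1 with hcw
    have hv : S.mulVec (fun j => PiP S j.val * cv j.val) = 0 := by
      apply ker_construct hn S hS
      · intro m; simp [hcv, parity_simps]
      · simp only [hcv]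
        rw [if_neg (by norm_num : ¬ Even 1), if_neg hOn1, mul_zero]
      · simp only [hcv]
        rw [if_pos (by norm_num : Even 0), if_pos hEn2, ← hPndef, hPn1, one_mul]
    have hw : S.mulVec (fun j => PiP S j.val * cw j.val) = 0 := by
      apply ker_construct hn S hS
      · intro m; simp [hcw, parity_simps]
      · simp only [hcw]
        rw [if_neg (by norm_num : ¬ Even 1), if_neg hOn1, ← hPndef, hPn1, one_mul]
      · simp only [hcw]
        rw [if_pos (by norm_num : Even 0), if_pos hEn2, mul_zero]
    have hvmem : (fun j => PiP S j.val * cv j.val) ∈ LinearMap.ker S.mulVecLin :=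
      (hmemiff _).mpr hv
    have hwmem : (fun j => PiP S j.val * cw j.val) ∈ LinearMap.ker S.mulVecLin :=
      (hmemiff _).mpr hw
    set φ : ↥(LinearMap.ker S.mulVecLin) →ₗ[ℝ] ℝ × ℝ :=
      LinearMap.prod ((LinearMap.proj 0).comp (Submodule.subtype _))
        ((LinearMap.proj 1).comp (Submodule.subtype _)) with hφ
    have hbij : Function.Bijective φ := by
      constructor
      · rw [injective_iff_map_eq_zero]
        intro y hy0
        have hyv : S.mulVec (y : Fin n → ℝ) = 0 := (hmemiff _).mp y.2
        have hy00 : (y : Fin n → ℝ) 0 = 0 := congrArg Prod.fst hy0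
        have hy01 : (y : Fin n → ℝ) 1 = 0 := congrArg Prod.snd hy0
        exact Subtype.ext (hker0 _ hyv hy00 hy01)
      · intro p
        refine ⟨p.1 • ⟨_, hvmem⟩ + (p.2 * s0) • ⟨_, hwmem⟩, ?_⟩
        have h10 : PiP S ((1 : Fin n).val) * cv ((1 : Fin n).val) = 0 := by
          rw [val_one hn]; simp only [hcv]; norm_num
        have h00 : PiP S ((0 : Fin n).val) * cv ((0 : Fin n).val) = 1 := by
          rw [val_zero]; simp only [hcv]; norm_num [Pi_zero hn S hS]
        have h01 : PiP S ((0 : Fin n).val) * cw ((0 : Fin n).val) = 0 := by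
          rw [val_zero]; simp only [hcw]; norm_num
        have h11 : PiP S ((1 : Fin n).val) * cw ((1 : Fin n).val) = s0 := by
          rw [val_one hn]; simp only [hcw]; rw [hs0def]; norm_num [Pi_one hn S hS]
        apply Prod.ext
        · show p.1 * (PiP S ((0:Fin n).val) * cv ((0:Fin n).val))
            + p.2 * s0 * (PiP S ((0:Fin n).val) * cw ((0:Fin n).val)) = p.1
          rw [h00, h01]; ring
        · show p.1 * (PiP S ((1:Fin n).val) * cv ((1:Fin n).val))
            + p.2 * s0 * (PiP S ((1:Fin n).val) * cw ((1:Fin n).val)) = p.2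
          rw [h10, h11]
          linear_combination p.2 * hsq0
    have hfr2 : Module.finrank ℝ ↥(LinearMap.ker S.mulVecLin) = 2 := by
      rw [(LinearEquiv.ofBijective φ hbij).finrank_eq]
      simp
    omega
  · -- Odd : rank = n - 1
    intro hodd
    have hnm : n % 2 = 1 := Nat.odd_iff.mp hodd
    have hEn1 : Even (n - 1) := Nat.even_iff.mpr (by omega)
    have hNE2 : ¬ Even (n - 2) := by rw [Nat.even_iff]; omega
    set c : ℕ → ℝ := fun m => if Even m then Pn else 1 with hc
    have hw : S.mulVec (fun j => PiP S j.val * c j.val) = 0 := by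
      apply ker_construct hn S hS
      · intro m; simp [hc, parity_simps]
      · simp only [hc]
        rw [if_neg (by norm_num : ¬ Even 1), if_pos hEn1, ← hPndef]
        exact hPP.symm
      · simp only [hc]
        rw [if_pos (by norm_num : Even 0), if_neg hNE2, ← hPndef, mul_one]
    have hwmem : (fun j => PiP S j.val * c j.val) ∈ LinearMap.ker S.mulVecLin :=
      (hmemiff _).mpr hw
    have hinj0 : ∀ x : Fin n → ℝ, S.mulVec x = 0 → x 1 = 0 → x = 0 := by
      intro x hx h1
      have hcN := closeN hn S hS x hx
      have hL2 := L1 hn S hS x hx (n - 2) hn2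
      rw [if_neg hNE2] at hL2
      rw [hL2, h1] at hcN
      have h0 : x 0 = 0 := by
        linear_combination A * hcN - x 0 * hsqA
      exact hker0 x hx h0 h1
    set φ : ↥(LinearMap.ker S.mulVecLin) →ₗ[ℝ] ℝ :=
      (LinearMap.proj 1).comp (Submodule.subtype _) with hφ
    have hbij : Function.Bijective φ := by
      constructor
      · rw [injective_iff_map_eq_zero]
        intro y hy0
        have hyv : S.mulVec (y : Fin n → ℝ) = 0 := (hmemiff _).mp y.2
        exact Subtype.ext (hinj0 _ hyv hy0)
      · intro t
        refine ⟨(t * s0) • ⟨_, hwmem⟩, ?_⟩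
        show t * s0 * (PiP S ((1 : Fin n).val) * c ((1 : Fin n).val)) = t
        rw [val_one hn]; simp only [hc]
        rw [if_neg (by norm_num : ¬ Even 1), Pi_one hn S hS, mul_one, ← hs0def]
        linear_combination t * hsq0
    have hfr1 : Module.finrank ℝ ↥(LinearMap.ker S.mulVecLin) = 1 := by
      rw [(LinearEquiv.ofBijective φ hbij).finrank_eq]
      exact Module.finrank_self ℝ
    omega
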